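/- Let m ∈ ℂ and let z ∈ ℂ ∖ (−∞,0]. Then 𝕀_m is twice complex differentiable at z and 𝕀_m''(z) − (m² − 1/4)·z^{−2}·𝕀_m(z) − 𝕀_m(z) = 0; likewise 𝒥_m is twice complex differentiable at z and 𝒥_m''(z) − (m² − 1/4)·z^{−2}·𝒥_m(z) + 𝒥_m(z) = 0. -/

import Mathlib

open MeasureTheory

/-- The modified Bessel function for dimension 1,
`𝕀_m(z) = Σ_{n=0}^∞ √π (z/2)^(2n+m+1/2) / (n! Γ(m+n+1))`, with principal branch powers. -/
noncomputable def Ibes (m z : ℂ) : ℂ :=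
  ∑' n : ℕ, (Real.sqrt Real.pi : ℂ) * (z / 2) ^ (2 * (n : ℂ) + m + 1 / 2) /
    ((n.factorial : ℂ) * Complex.Gamma (m + (n : ℂ) + 1))

/-- The Bessel function for dimension 1,
`𝒥_m(z) = Σ_{n=0}^∞ (−1)^n √π (z/2)^(2n+m+1/2) / (n! Γ(m+n+1))`, with principal branch powers. -/
noncomputable def Jbes (m z : ℂ) : ℂ :=
  ∑' n : ℕ, (-1 : ℂ) ^ n * (Real.sqrt Real.pi : ℂ) * (z / 2) ^ (2 * (n : ℂ) + m + 1 / 2) /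
    ((n.factorial : ℂ) * Complex.Gamma (m + (n : ℂ) + 1))

namespace BesselAux

open Complex Filter

/-- power series sum -/
noncomputable def F (a : ℕ → ℂ) (w : ℂ) : ℂ := ∑' n : ℕ, a n * w ^ n

/-- coefficients with sums converging everywhere -/
def Good (a : ℕ → ℂ) : Prop := ∀ r : ℝ, 0 ≤ r → Summable (fun n : ℕ => ‖a n‖ * r ^ n)

/-- derivative coefficients -/
noncomputable def sh (a : ℕ → ℂ) : ℕ → ℂ := fun n => ((n : ℂ) + 1) * a (n + 1)

lemma norm_sh (a : ℕ → ℂ) (n : ℕ) : ‖sh a n‖ = ((n : ℝ) + 1) * ‖a (n + 1)‖ := by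
  rw [sh, norm_mul]
  congr 1
  rw [show ((n : ℂ) + 1) = ((n + 1 : ℕ) : ℂ) by push_cast; ring, Complex.norm_natCast]
  push_cast; ring

lemma Good.sh {a : ℕ → ℂ} (ha : Good a) : Good (BesselAux.sh a) := by
  intro r hr
  have h2 : Summable (fun n : ℕ => ‖a (n + 1)‖ * (2 * r + 1) ^ (n + 1)) :=
    (summable_nat_add_iff 1).2 (ha (2 * r + 1) (by linarith))
  refine Summable.of_nonneg_of_le (fun n => by positivity) (fun n => ?_) h2
  rw [norm_sh]
  have hn : ((n : ℝ) + 1) ≤ 2 ^ n := by exact_mod_cast Nat.lt_two_pow_self (n := n)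
  have key : ((n : ℝ) + 1) * r ^ n ≤ (2 * r + 1) ^ (n + 1) := by
    calc ((n : ℝ) + 1) * r ^ n ≤ 2 ^ n * r ^ n :=
          mul_le_mul_of_nonneg_right hn (pow_nonneg hr n)
      _ = (2 * r) ^ n := by rw [mul_pow]
      _ ≤ (2 * r + 1) ^ n := pow_le_pow_left₀ (by positivity) (by linarith) n
      _ ≤ (2 * r + 1) ^ (n + 1) := pow_le_pow_right₀ (by linarith) (Nat.le_succ n)
  calc ((n : ℝ) + 1) * ‖a (n + 1)‖ * r ^ n = ‖a (n + 1)‖ * (((n : ℝ) + 1) * r ^ n) := by ring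
    _ ≤ ‖a (n + 1)‖ * (2 * r + 1) ^ (n + 1) := by
        exact mul_le_mul_of_nonneg_left key (norm_nonneg _)

lemma Good.summable_n {a : ℕ → ℂ} (ha : Good a) {r : ℝ} (hr : 0 ≤ r) :
    Summable (fun n : ℕ => (n : ℝ) * ‖a n‖ * r ^ n) := by
  refine Summable.of_nonneg_of_le (fun n => by positivity) (fun n => ?_) (ha (2 * r) (by linarith))
  have hn : (n : ℝ) ≤ 2 ^ n := by exact_mod_cast (Nat.lt_two_pow_self (n := n)).le
  calc (n : ℝ) * ‖a n‖ * r ^ n ≤ 2 ^ n * ‖a n‖ * r ^ n := by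
        exact mul_le_mul_of_nonneg_right (mul_le_mul_of_nonneg_right hn (norm_nonneg _)) (pow_nonneg hr n)
    _ = ‖a n‖ * (2 * r) ^ n := by rw [mul_pow]; ring

lemma Good.summable_at {a : ℕ → ℂ} (ha : Good a) (w : ℂ) :
    Summable (fun n : ℕ => a n * w ^ n) := by
  refine Summable.of_norm_bounded (ha ‖w‖ (norm_nonneg w)) (fun n => ?_)
  rw [norm_mul, norm_pow]

lemma hasDerivAt_F {a : ℕ → ℂ} (ha : Good a) (w : ℂ) :
    HasDerivAt (F a) (F (sh a) w) w := by
  set R : ℝ := ‖w‖ + 1 with hR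
  have hR1 : (1 : ℝ) ≤ R := by have := norm_nonneg w; rw [hR]; linarith
  have hR0 : (0 : ℝ) ≤ R := by linarith
  have hu : Summable (fun n : ℕ => (n : ℝ) * ‖a n‖ * R ^ n) := ha.summable_n hR0
  have hwmem : w ∈ Metric.ball (0 : ℂ) R := by
    simp [hR, Metric.mem_ball, dist_zero_right]
  have key : HasDerivAt (fun z : ℂ => ∑' n : ℕ, a n * z ^ n)
      (∑' n : ℕ, a n * ((n : ℂ) * w ^ (n - 1))) w := by
    refine hasDerivAt_tsum_of_isPreconnected hu Metric.isOpen_ball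
      ((convex_ball (0 : ℂ) R).isPreconnected) (fun n y _ => (hasDerivAt_pow n y).const_mul (a n))
      (fun n y hy => ?_) hwmem (ha.summable_at w) hwmem
    rw [Metric.mem_ball, dist_zero_right] at hy
    rw [norm_mul, norm_mul, norm_pow, Complex.norm_natCast]
    have h1 : ‖y‖ ^ (n - 1) ≤ R ^ n :=
      le_trans (pow_le_pow_left₀ (norm_nonneg _) hy.le _)
        (pow_le_pow_right₀ hR1 (Nat.sub_le n 1))
    calc ‖a n‖ * ((n : ℝ) * ‖y‖ ^ (n - 1)) ≤ ‖a n‖ * ((n : ℝ) * R ^ n) := by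
          exact mul_le_mul_of_nonneg_left (mul_le_mul_of_nonneg_left h1 (Nat.cast_nonneg n)) (norm_nonneg _)
      _ = (n : ℝ) * ‖a n‖ * R ^ n := by ring
  have hs : Summable (fun n : ℕ => a n * ((n : ℂ) * w ^ (n - 1))) := by
    refine Summable.of_norm_bounded hu (fun n => ?_)
    rw [norm_mul, norm_mul, norm_pow, Complex.norm_natCast]
    have h1 : ‖w‖ ^ (n - 1) ≤ R ^ n :=
      le_trans (pow_le_pow_left₀ (norm_nonneg _) (by simp [hR]) _)
        (pow_le_pow_right₀ hR1 (Nat.sub_le n 1))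
    calc ‖a n‖ * ((n : ℝ) * ‖w‖ ^ (n - 1)) ≤ ‖a n‖ * ((n : ℝ) * R ^ n) := by
          exact mul_le_mul_of_nonneg_left (mul_le_mul_of_nonneg_left h1 (Nat.cast_nonneg n)) (norm_nonneg _)
      _ = (n : ℝ) * ‖a n‖ * R ^ n := by ring
  have heq : (∑' n : ℕ, a n * ((n : ℂ) * w ^ (n - 1))) = F (sh a) w := by
    rw [Summable.tsum_eq_zero_add hs]
    simp only [Nat.cast_zero, zero_mul, mul_zero, zero_add, Nat.add_sub_cancel]
    refine tsum_congr (fun n => ?_)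
    rw [sh]
    push_cast
    ring
  rw [← heq]
  exact key


lemma key_identity (m ε : ℂ) {a : ℕ → ℂ} (ha : Good a)
    (hrec : ∀ n : ℕ, ((n : ℂ) + 1) * ((n : ℂ) + 1 + m) * a (n + 1) = ε * a n) (u : ℂ) :
    u * F (sh (sh a)) u + (m + 1) * F (sh a) u = ε * F a u := by
  have S0 := ha.summable_at u
  have S1 := ha.sh.summable_at u
  have S2 := ha.sh.sh.summable_at u
  -- d n = n * (n+1) * a (n+1) * u ^ n
  set d : ℕ → ℂ := fun n => (n : ℂ) * ((n : ℂ) + 1) * a (n + 1) * u ^ n with hd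
  have hdsum : Summable d := by
    refine Summable.of_norm_bounded (ha.sh.summable_n (norm_nonneg u)) (fun n => ?_)
    rw [hd]
    simp only
    rw [show (n : ℂ) * ((n : ℂ) + 1) * a (n + 1) * u ^ n = (n : ℂ) * (sh a n * u ^ n) by
      rw [sh]; ring, norm_mul, norm_mul, norm_pow, Complex.norm_natCast, norm_sh]
    ring_nf
    exact le_refl _
  -- first summand: u * F (sh (sh a)) u = ∑' d
  have h1 : u * F (sh (sh a)) u = ∑' n : ℕ, d n := by
    rw [Summable.tsum_eq_zero_add hdsum]
    have : d 0 = 0 := by simp [hd]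
    rw [this, zero_add, F, ← tsum_mul_left]
    refine tsum_congr (fun n => ?_)
    rw [hd]
    simp only [sh]
    push_cast
    ring
  have h2 : (m + 1) * F (sh a) u = ∑' n : ℕ, (m + 1) * (sh a n * u ^ n) := by
    rw [F, ← tsum_mul_left]
  rw [h1, h2, ← Summable.tsum_add hdsum (S1.mul_left (m + 1))]
  rw [show ε * F a u = ∑' n : ℕ, ε * (a n * u ^ n) by rw [F, ← tsum_mul_left]]
  refine tsum_congr (fun n => ?_)
  rw [hd]
  simp only [sh]
  have := hrec n
  calc (n : ℂ) * ((n : ℂ) + 1) * a (n + 1) * u ^ n + (m + 1) * (((n : ℂ) + 1) * a (n + 1) * u ^ n)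
      = (((n : ℂ) + 1) * ((n : ℂ) + 1 + m) * a (n + 1)) * u ^ n := by ring
    _ = ε * (a n * u ^ n) := by rw [this]; ring

/-- the Bessel coefficients -/
noncomputable def bc (m ε : ℂ) : ℕ → ℂ := fun n =>
  ε ^ n * (Real.sqrt Real.pi : ℂ) / (n.factorial * Complex.Gamma (m + n + 1))

lemma bc_rec_eq (m ε : ℂ) (n : ℕ) (hne : m + n + 1 ≠ 0)
    (hΓ : Complex.Gamma (m + n + 1) ≠ 0) :
    bc m ε (n + 1) = bc m ε n * (ε / (((n : ℂ) + 1) * (m + n + 1))) := by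
  have hΓ2 : Complex.Gamma (m + ((n : ℕ) + 1 : ℕ) + 1) = (m + n + 1) * Complex.Gamma (m + n + 1) := by
    rw [show (m + ((n : ℕ) + 1 : ℕ) + 1 : ℂ) = (m + n + 1) + 1 by push_cast; ring]
    exact Complex.Gamma_add_one _ hne
  have hfac : (((n + 1).factorial : ℕ) : ℂ) = ((n : ℂ) + 1) * (n.factorial : ℂ) := by
    push_cast [Nat.factorial_succ]; ring
  have hn1 : ((n : ℂ) + 1) ≠ 0 := Nat.cast_add_one_ne_zero n
  have hfacn : ((n.factorial : ℕ) : ℂ) ≠ 0 := Nat.cast_ne_zero.2 n.factorial_ne_zero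
  simp only [bc]
  rw [hΓ2, hfac]
  field_simp
  ring

lemma bc_rec (m ε : ℂ) (n : ℕ) :
    ((n : ℂ) + 1) * ((n : ℂ) + 1 + m) * bc m ε (n + 1) = ε * bc m ε n := by
  by_cases hne : m + n + 1 = 0
  · have h1 : ((n : ℂ) + 1 + m) = 0 := by linear_combination hne
    have h2 : Complex.Gamma (m + n + 1) = 0 := by rw [hne, Complex.Gamma_zero]
    rw [h1]
    simp [bc, h2]
  · by_cases hΓ : Complex.Gamma (m + n + 1) = 0
    · have hΓ2 : Complex.Gamma (m + ((n : ℂ) + 1) + 1) = 0 := by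
        rw [show (m + ((n : ℂ) + 1) + 1 : ℂ) = (m + n + 1) + 1 by ring,
          Complex.Gamma_add_one _ hne, hΓ, mul_zero]
      simp only [bc]
      push_cast
      rw [hΓ2, hΓ]
      simp
    · rw [bc_rec_eq m ε n hne hΓ]
      have hn1 : ((n : ℂ) + 1) ≠ 0 := Nat.cast_add_one_ne_zero n
      have hne' : ((n : ℂ) + 1 + m) ≠ 0 := fun h => hne (by linear_combination h)
      field_simp
      ring

lemma good_bc (m ε : ℂ) (hε : ‖ε‖ = 1) : Good (bc m ε) := by
  intro r hr
  have habs : ∀ k : ℕ, (‖m‖ + 2 * r ≤ (k : ℝ)) →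
      ‖bc m ε (k + 1)‖ * r ^ (k + 1) ≤ (1 / 2) * (‖bc m ε k‖ * r ^ k) := by
    intro k hk
    have hrek : 0 < (m + k + 1).re := by
      have h1 : |m.re| ≤ ‖m‖ := Complex.abs_re_le_norm m
      simp only [Complex.add_re, Complex.natCast_re, Complex.one_re]
      have : -‖m‖ ≤ m.re := by cases abs_le.1 h1; assumption
      nlinarith [hr]
    have hne : m + k + 1 ≠ 0 := fun h => by simp [h] at hrek
    have hΓ : Complex.Gamma (m + k + 1) ≠ 0 := Complex.Gamma_ne_zero_of_re_pos hrek
    rw [bc_rec_eq m ε k hne hΓ, norm_mul, norm_div, norm_mul, hε]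
    have hnorm1 : ‖((k : ℂ) + 1)‖ = (k : ℝ) + 1 := by
      rw [show ((k : ℂ) + 1) = ((k + 1 : ℕ) : ℂ) by push_cast; ring, Complex.norm_natCast]
      push_cast; ring
    have hnormge : 2 * r + 1 ≤ ‖(m + k + 1 : ℂ)‖ := by
      have h2 : ‖((k : ℂ) + 1)‖ - ‖m‖ ≤ ‖m + k + 1‖ := by
        calc ‖((k : ℂ) + 1)‖ - ‖m‖ ≤ ‖m + ((k : ℂ) + 1)‖ := by
              have := norm_add_le (-(m : ℂ)) (m + ((k:ℂ)+1))
              simp only [neg_add_cancel_left, norm_neg] at this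
              linarith
          _ = ‖(m + k + 1 : ℂ)‖ := by ring_nf
      rw [hnorm1] at h2
      linarith
    have hden : (0 : ℝ) < ‖((k : ℂ) + 1)‖ * ‖(m + k + 1 : ℂ)‖ :=
      mul_pos (by rw [hnorm1]; positivity) (by linarith)
    have hfrac : 1 / (‖((k : ℂ) + 1)‖ * ‖(m + k + 1 : ℂ)‖) * r ≤ 1 / 2 := by
      rcases eq_or_lt_of_le hr with h | h
      · rw [← h]; norm_num
      · rw [div_mul_eq_mul_div, one_mul, div_le_div_iff₀ hden (by norm_num)]
        have h1 : (1 : ℝ) ≤ ‖((k : ℂ) + 1)‖ := by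
          rw [hnorm1]; have := Nat.cast_nonneg (α := ℝ) k; linarith
        nlinarith [hnormge]
    calc ‖bc m ε k‖ * (1 / (‖((k : ℂ) + 1)‖ * ‖(m + k + 1 : ℂ)‖)) * r ^ (k + 1)
        = (‖bc m ε k‖ * r ^ k) * (1 / (‖((k : ℂ) + 1)‖ * ‖(m + k + 1 : ℂ)‖) * r) := by ring
      _ ≤ (‖bc m ε k‖ * r ^ k) * (1 / 2) := by
          exact mul_le_mul_of_nonneg_left hfrac (by positivity)
      _ = (1 / 2) * (‖bc m ε k‖ * r ^ k) := by ring
  have := summable_of_ratio_norm_eventually_le (f := fun n : ℕ => ‖bc m ε n‖ * r ^ n)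
    (r := 1 / 2) (by norm_num) ?_
  · exact this
  · filter_upwards [eventually_ge_atTop (Nat.ceil (‖m‖ + 2 * r))] with k hk
    have hk' : ‖m‖ + 2 * r ≤ (k : ℝ) := le_trans (Nat.le_ceil _) (by exact_mod_cast hk)
    have h := habs k hk'
    rw [Real.norm_of_nonneg (by positivity), Real.norm_of_nonneg (by positivity)]
    linarith [h]


/-- closed form -/
noncomputable def Gf (m : ℂ) (a : ℕ → ℂ) (w : ℂ) : ℂ :=
  (w / 2) ^ (m + 1 / 2) * F a ((w / 2) ^ 2)

/-- first derivative of the closed form -/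
noncomputable def Gf₁ (m : ℂ) (a : ℕ → ℂ) (w : ℂ) : ℂ :=
  (m + 1 / 2) / 2 * (w / 2) ^ (m + 1 / 2 - 1) * F a ((w / 2) ^ 2)
    + (w / 2) ^ (m + 1 / 2) * F (sh a) ((w / 2) ^ 2) * (w / 2)

lemma mem_slitPlane_half {w : ℂ} (hw : w ∈ Complex.slitPlane) : w / 2 ∈ Complex.slitPlane := by
  rw [Complex.mem_slitPlane_iff] at *
  rcases hw with h | h
  · left; rw [Complex.div_re]; simp; positivity
  · right; simpa [Complex.div_im] using h

lemma hasDerivAt_Gf (m : ℂ) {a : ℕ → ℂ} (ha : Good a) {w : ℂ}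
    (hw : w ∈ Complex.slitPlane) : HasDerivAt (Gf m a) (Gf₁ m a w) w := by
  have hw2 := mem_slitPlane_half hw
  have hhd : HasDerivAt (fun x : ℂ => x / 2) ((1 : ℂ) / 2) w := (hasDerivAt_id w).div_const 2
  have hpow : HasDerivAt (fun x : ℂ => (x / 2) ^ (m + 1 / 2))
      ((m + 1 / 2) * (w / 2) ^ (m + 1 / 2 - 1) * ((1 : ℂ) / 2)) w := hhd.cpow_const hw2
  have hFu : HasDerivAt (fun x : ℂ => F a ((x / 2) ^ 2))
      (F (sh a) ((w / 2) ^ 2) * (((2 : ℕ) : ℂ) * (w / 2) ^ (2 - 1) * ((1 : ℂ) / 2))) w :=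
    HasDerivAt.comp w (hasDerivAt_F ha _) (hhd.pow 2)
  refine (hpow.mul hFu).congr_deriv ?_
  simp only [Gf₁]
  push_cast
  ring

lemma hasDerivAt_Gf₁ (m : ℂ) {a : ℕ → ℂ} (ha : Good a) {w : ℂ}
    (hw : w ∈ Complex.slitPlane) :
    HasDerivAt (Gf₁ m a)
      ((m + 1 / 2) * (m + 1 / 2 - 1) / 4 * (w / 2) ^ (m + 1 / 2 - 1 - 1) * F a ((w / 2) ^ 2)
        + (m + 1 / 2) * (w / 2) ^ (m + 1 / 2 - 1) * (w / 2) * F (sh a) ((w / 2) ^ 2)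
        + (w / 2) ^ (m + 1 / 2) * (w / 2) ^ 2 * F (sh (sh a)) ((w / 2) ^ 2)
        + 1 / 2 * (w / 2) ^ (m + 1 / 2) * F (sh a) ((w / 2) ^ 2)) w := by
  have hw2 := mem_slitPlane_half hw
  have hhd : HasDerivAt (fun x : ℂ => x / 2) ((1 : ℂ) / 2) w := (hasDerivAt_id w).div_const 2
  have hpow : HasDerivAt (fun x : ℂ => (x / 2) ^ (m + 1 / 2))
      ((m + 1 / 2) * (w / 2) ^ (m + 1 / 2 - 1) * ((1 : ℂ) / 2)) w := hhd.cpow_const hw2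
  have hpow1 : HasDerivAt (fun x : ℂ => (x / 2) ^ (m + 1 / 2 - 1))
      ((m + 1 / 2 - 1) * (w / 2) ^ (m + 1 / 2 - 1 - 1) * ((1 : ℂ) / 2)) w := hhd.cpow_const hw2
  have hFu : HasDerivAt (fun x : ℂ => F a ((x / 2) ^ 2))
      (F (sh a) ((w / 2) ^ 2) * (((2 : ℕ) : ℂ) * (w / 2) ^ (2 - 1) * ((1 : ℂ) / 2))) w :=
    HasDerivAt.comp w (hasDerivAt_F ha _) (hhd.pow 2)
  have hFu1 : HasDerivAt (fun x : ℂ => F (sh a) ((x / 2) ^ 2))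
      (F (sh (sh a)) ((w / 2) ^ 2) * (((2 : ℕ) : ℂ) * (w / 2) ^ (2 - 1) * ((1 : ℂ) / 2))) w :=
    HasDerivAt.comp w (hasDerivAt_F ha.sh _) (hhd.pow 2)
  have h1 := (hpow1.const_mul ((m + 1 / 2) / 2)).mul hFu
  have h2 := (hpow.mul hFu1).mul hhd
  refine (h1.add h2).congr_deriv ?_
  simp only [Pi.mul_apply]
  push_cast
  ring

lemma master (m ε : ℂ) (hε : ‖ε‖ = 1) (B : ℂ → ℂ)
    (hB : ∀ w ∈ Complex.slitPlane, B w = Gf m (bc m ε) w)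
    (z : ℂ) (hz : z ∈ Complex.slitPlane) :
    DifferentiableAt ℂ B z ∧ DifferentiableAt ℂ (deriv B) z ∧
      deriv (deriv B) z - (m ^ 2 - 1 / 4) * z ^ (-2 : ℤ) * B z - ε * B z = 0 := by
  set a := bc m ε with hadef
  have ha : Good a := good_bc m ε hε
  have hz0 : z ≠ 0 := Complex.slitPlane_ne_zero hz
  have ht0 : z / 2 ≠ 0 := div_ne_zero hz0 two_ne_zero
  have hBG : ∀ w ∈ Complex.slitPlane, B =ᶠ[nhds w] Gf m a := fun w hw =>
    (Complex.isOpen_slitPlane.eventually_mem hw).mono hB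
  have hdiffB : DifferentiableAt ℂ B z :=
    (hBG z hz).differentiableAt_iff.2 (hasDerivAt_Gf m ha hz).differentiableAt
  have hderivB : ∀ w ∈ Complex.slitPlane, deriv B w = Gf₁ m a w := fun w hw =>
    ((hBG w hw).deriv_eq).trans (hasDerivAt_Gf m ha hw).deriv
  have hev : deriv B =ᶠ[nhds z] Gf₁ m a :=
    (Complex.isOpen_slitPlane.eventually_mem hz).mono hderivB
  have hd2 := hasDerivAt_Gf₁ m ha hz
  have hdiffB' : DifferentiableAt ℂ (deriv B) z :=
    hev.differentiableAt_iff.2 hd2.differentiableAt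
  refine ⟨hdiffB, hdiffB', ?_⟩
  have hd2' : deriv (deriv B) z =
      (m + 1 / 2) * (m + 1 / 2 - 1) / 4 * (z / 2) ^ (m + 1 / 2 - 1 - 1) * F a ((z / 2) ^ 2)
        + (m + 1 / 2) * (z / 2) ^ (m + 1 / 2 - 1) * (z / 2) * F (sh a) ((z / 2) ^ 2)
        + (z / 2) ^ (m + 1 / 2) * (z / 2) ^ 2 * F (sh (sh a)) ((z / 2) ^ 2)
        + 1 / 2 * (z / 2) ^ (m + 1 / 2) * F (sh a) ((z / 2) ^ 2) :=
    (hev.deriv_eq).trans hd2.deriv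
  have hBz : B z = Gf m a z := hB z hz
  rw [hd2', hBz, Gf]
  have key := key_identity m ε ha (bc_rec m ε) ((z / 2) ^ 2)
  have e0 : (z / 2) ^ (m + 1 / 2 - 1 - 1) = (z / 2) ^ (m + 1 / 2 - 2) := by
    rw [show (m + 1 / 2 - 1 - 1 : ℂ) = m + 1 / 2 - 2 by ring]
  have e1 : (z / 2) ^ (m + 1 / 2 - 1) = (z / 2) ^ (m + 1 / 2 - 2) * (z / 2) := by
    rw [show (m + 1 / 2 - 1 : ℂ) = (m + 1 / 2 - 2) + 1 by ring, Complex.cpow_add _ _ ht0,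
      Complex.cpow_one]
  have e2 : (z / 2) ^ (m + 1 / 2) = (z / 2) ^ (m + 1 / 2 - 2) * (z / 2) ^ 2 := by
    rw [show (m + 1 / 2 : ℂ) = (m + 1 / 2 - 2) + 2 by ring, Complex.cpow_add _ _ ht0,
      Complex.cpow_ofNat]
    ring_nf
  have e4 : z ^ (-2 : ℤ) * (z / 2) ^ 2 = 1 / 4 := by
    have h2 : z ^ (-2 : ℤ) = (z ^ 2)⁻¹ := by rw [zpow_neg, zpow_two, sq]
    rw [h2, div_pow]
    field_simp [hz0]
    norm_num
  rw [e0, e1, e2]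
  linear_combination ((z / 2) ^ (m + 1 / 2 - 2) * (z / 2) ^ 2) * key -
    ((m ^ 2 - 1 / 4) * (z / 2) ^ (m + 1 / 2 - 2) * F a ((z / 2) ^ 2)) * e4


lemma cpow_split {w : ℂ} (hw : w / 2 ≠ 0) (m : ℂ) (n : ℕ) :
    (w / 2) ^ (2 * (n : ℂ) + m + 1 / 2) = (w / 2) ^ (m + 1 / 2) * ((w / 2) ^ 2) ^ n := by
  rw [show (2 * (n : ℂ) + m + 1 / 2) = (m + 1 / 2) + ((2 * n : ℕ) : ℂ) by push_cast; ring,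
    Complex.cpow_add _ _ hw, Complex.cpow_natCast, pow_mul]

lemma Ibes_eq (m : ℂ) : ∀ w ∈ Complex.slitPlane, Ibes m w = Gf m (bc m 1) w := by
  intro w hw
  have ht0 : w / 2 ≠ 0 := div_ne_zero (Complex.slitPlane_ne_zero hw) two_ne_zero
  rw [Ibes, Gf, F, ← tsum_mul_left]
  refine tsum_congr fun n => ?_
  rw [cpow_split ht0, bc]
  simp only [one_pow]
  ring

lemma Jbes_eq (m : ℂ) : ∀ w ∈ Complex.slitPlane, Jbes m w = Gf m (bc m (-1)) w := by
  intro w hw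
  have ht0 : w / 2 ≠ 0 := div_ne_zero (Complex.slitPlane_ne_zero hw) two_ne_zero
  rw [Jbes, Gf, F, ← tsum_mul_left]
  refine tsum_congr fun n => ?_
  rw [cpow_split ht0, bc]
  ring

end BesselAux

/-- `𝕀_m` solves the modified Bessel equation for dimension 1, and `𝒥_m` solves the
standard Bessel equation for dimension 1, on `ℂ ∖ (−∞,0]`. -/
theorem stmt5 (m z : ℂ) (hz : z ∈ Complex.slitPlane) :
    (DifferentiableAt ℂ (Ibes m) z ∧ DifferentiableAt ℂ (deriv (Ibes m)) z ∧
      deriv (deriv (Ibes m)) z - (m ^ 2 - 1 / 4) * z ^ (-2 : ℤ) * Ibes m z - Ibes m z = 0) ∧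
    (DifferentiableAt ℂ (Jbes m) z ∧ DifferentiableAt ℂ (deriv (Jbes m)) z ∧
      deriv (deriv (Jbes m)) z - (m ^ 2 - 1 / 4) * z ^ (-2 : ℤ) * Jbes m z + Jbes m z = 0) := by
  obtain ⟨hI1, hI2, hI3⟩ :=
    BesselAux.master m 1 (by norm_num) (Ibes m) (BesselAux.Ibes_eq m) z hz
  obtain ⟨hJ1, hJ2, hJ3⟩ :=
    BesselAux.master m (-1) (by norm_num) (Jbes m) (BesselAux.Jbes_eq m) z hz
  exact ⟨⟨hI1, hI2, by linear_combination hI3⟩, ⟨hJ1, hJ2, by linear_combination hJ3⟩⟩
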